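/- Let A be the algebra generated by a in which every word containing two or more subwords a² is zero. If a multilinear polynomial f is alternating in the pair (x₁,x₂) and also alternating in a disjoint pair (x₃,x₄), then f is a polynomial identity of A. -/

import Mathlib

noncomputable section

open Filter Topology

/-- Is a free-magma element a single leaf? -/
def FreeMagma.isLeaf {X : Type*} : FreeMagma X → Bool
  | .of _ => true
  | .mul _ _ => false

/-- The number of occurrences of the subword `a·a` in a monomial in one generator `a`. -/
def countSq : FreeMagma Unit → ℕ
  | .of _ => 0
  | .mul x y => countSq x + countSq y + (if x.isLeaf && y.isLeaf then 1 else 0)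

variable (F : Type) [Field F] [CharZero F]

/-- The free nonassociative (non-unital) algebra on one generator `a`. -/
abbrev FA := FreeNonUnitalNonAssocAlgebra F Unit

/-- The monomial of `FA F` corresponding to a magma word. -/
def mono (m : FreeMagma Unit) : FA F := MonoidAlgebra.single m (1 : F)

/-- The relations ideal of `A`: the span of all monomials containing two or more
subwords equal to `a²`.  The algebra `A` of the paper is `FA F` modulo `relI F`. -/
def relI : Submodule F (FA F) :=
  Submodule.span F {x : FA F | ∃ m : FreeMagma Unit, 2 ≤ countSq m ∧ x = mono F m}

/-- Number of occurrences of the variable `i` in a magma word over `ℕ`. -/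
def occ : FreeMagma ℕ → ℕ → ℕ
  | .of j, i => if j = i then 1 else 0
  | .mul x y, i => occ x i + occ y i

/-- The free nonassociative algebra on countably many variables `x₀, x₁, …`. -/
abbrev FreeN := FreeNonUnitalNonAssocAlgebra F ℕ

/-- The monomial of `FreeN F` corresponding to a magma word. -/
def monoN (t : FreeMagma ℕ) : FreeN F := MonoidAlgebra.single t (1 : F)

/-- `P_n`: the space of multilinear polynomials in the variables `x₀, …, x_{n-1}`. -/
def Pmulti (n : ℕ) : Submodule F (FreeN F) :=
  Submodule.span F {x : FreeN F | ∃ t : FreeMagma ℕ,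
    (∀ i : ℕ, occ t i = if i < n then 1 else 0) ∧ x = monoN F t}

/-- The identities of the algebra `A = FA F / relI F`: polynomials vanishing under every
substitution of elements of `A`. -/
def IdA : Submodule F (FreeN F) :=
  ⨅ xs : ℕ → FA F,
    Submodule.comap (FreeNonUnitalNonAssocAlgebra.lift F xs : FreeN F →ₗ[F] FA F) (relI F)

/-- The `n`-th codimension of `A`: the dimension of `P_n/(P_n ∩ Id(A))`. -/
def codimA (n : ℕ) : ℕ :=
  Module.finrank F (↥(Pmulti F n) ⧸ Submodule.comap (Pmulti F n).subtype (IdA F))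

/-- Renaming of variables: the algebra endomorphism of `FreeN F` induced by `σ : ℕ → ℕ`. -/
def renameVars (σ : ℕ → ℕ) : FreeN F →ₙₐ[F] FreeN F :=
  FreeNonUnitalNonAssocAlgebra.lift F (fun i => FreeNonUnitalNonAssocAlgebra.of F (σ i))

/-! ### Auxiliary lemmas -/

open FreeNonUnitalNonAssocAlgebra

lemma occ_mul' (x y : FreeMagma ℕ) (i : ℕ) : occ (x * y) i = occ x i + occ y i := rfl

lemma countSq_mul' (x y : FreeMagma Unit) :
    countSq (x * y) = countSq x + countSq y + (if x.isLeaf && y.isLeaf then 1 else 0) := rfl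

lemma countSq_pos (m : FreeMagma Unit) (h : m.isLeaf = false) : 1 ≤ countSq m := by
  induction m with
  | ih1 x => simp [FreeMagma.isLeaf] at h
  | ih2 x y hx hy =>
    rw [countSq_mul']
    rcases hxl : x.isLeaf with _ | _
    · have := hx hxl; omega
    · rcases hyl : y.isLeaf with _ | _
      · have := hy hyl; omega
      · simp [hxl, hyl]

lemma countSq_add_pos {m m' : FreeMagma Unit} (h : m ≠ m') :
    1 ≤ countSq m + countSq m' := by
  rcases hm : m.isLeaf with _ | _
  · have := countSq_pos m hm; omega
  · rcases hm' : m'.isLeaf with _ | _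
    · have := countSq_pos m' hm'; omega
    · exfalso
      cases m with
      | of u => cases m' with
        | of u' => exact h (by cases u; cases u'; rfl)
        | mul a b => simp [FreeMagma.isLeaf] at hm'
      | mul a b => simp [FreeMagma.isLeaf] at hm

/-- Substitution of magma words for the variables. -/
def substW (ms : ℕ → FreeMagma Unit) : FreeMagma ℕ → FreeMagma Unit
  | .of i => ms i
  | .mul x y => .mul (substW ms x) (substW ms y)

lemma substW_of (ms : ℕ → FreeMagma Unit) (i : ℕ) : substW ms (.of i) = ms i := rfl

lemma substW_mul (ms : ℕ → FreeMagma Unit) (x y : FreeMagma ℕ) :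
    substW ms (x * y) = substW ms x * substW ms y := rfl

lemma countSq_substW (ms : ℕ → FreeMagma Unit) (t : FreeMagma ℕ) :
    ∑ i ∈ Finset.range 4, occ t i * countSq (ms i) ≤ countSq (substW ms t) := by
  induction t with
  | ih1 j =>
    rw [substW_of]
    by_cases hj : j < 4
    · rw [Finset.sum_eq_single j]
      · simp [occ]
      · intro b _ hb; simp [occ, Ne.symm hb]
      · intro hb; exact absurd (Finset.mem_range.2 hj) hb
    · rw [Finset.sum_eq_zero]
      · exact Nat.zero_le _
      · intro b hb
        have : j ≠ b := by intro h; subst h; exact hj (Finset.mem_range.1 hb)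
        simp [occ, this]
  | ih2 x y hx hy =>
    rw [substW_mul, countSq_mul']
    calc ∑ i ∈ Finset.range 4, occ (x * y) i * countSq (ms i)
        = (∑ i ∈ Finset.range 4, occ x i * countSq (ms i)) +
          ∑ i ∈ Finset.range 4, occ y i * countSq (ms i) := by
          rw [← Finset.sum_add_distrib]
          refine Finset.sum_congr rfl fun i _ => ?_
          rw [occ_mul']; ring
      _ ≤ countSq (substW ms x) + countSq (substW ms y) := Nat.add_le_add hx hy
      _ ≤ _ := by omega

/-- Evaluation of a magma word with values in `FA F`. -/
def evalW (xs : ℕ → FA F) : FreeMagma ℕ → FA F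
  | .of i => xs i
  | .mul x y => evalW xs x * evalW xs y

lemma evalW_of (xs : ℕ → FA F) (i : ℕ) : evalW F xs (.of i) = xs i := rfl

lemma evalW_mul (xs : ℕ → FA F) (x y : FreeMagma ℕ) :
    evalW F xs (x * y) = evalW F xs x * evalW F xs y := rfl

lemma monoN_mul (x y : FreeMagma ℕ) : monoN F (x * y) = monoN F x * monoN F y := by
  rw [monoN, monoN, monoN, MonoidAlgebra.single_mul_single, one_mul]

lemma lift_monoN (xs : ℕ → FA F) (t : FreeMagma ℕ) :
    lift F xs (monoN F t) = evalW F xs t := by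
  induction t with
  | ih1 i =>
    have h : monoN F (FreeMagma.of i) = of F i := rfl
    rw [h, lift_of_apply, evalW_of]
  | ih2 x y hx hy =>
    rw [monoN_mul, map_mul, hx, hy, evalW_mul]

lemma evalW_monos (ms : ℕ → FreeMagma Unit) (t : FreeMagma ℕ) :
    evalW F (fun i => mono F (ms i)) t = mono F (substW ms t) := by
  induction t with
  | ih1 i => rfl
  | ih2 x y hx hy =>
    rw [evalW_mul, substW_mul, hx, hy, mono, mono, mono,
      MonoidAlgebra.single_mul_single, one_mul]

lemma evalW_congr (xs ys : ℕ → FA F) (t : FreeMagma ℕ)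
    (h : ∀ i, occ t i ≠ 0 → xs i = ys i) : evalW F xs t = evalW F ys t := by
  induction t with
  | ih1 i =>
    rw [evalW_of, evalW_of]
    exact h i (by simp [occ])
  | ih2 x y hx hy =>
    rw [evalW_mul, evalW_mul,
      hx (fun i hi => h i (by rw [occ_mul']; omega)),
      hy (fun i hi => h i (by rw [occ_mul']; omega))]

lemma evalW_update_of_occ_zero (xs : ℕ → FA F) (k : ℕ) (v : FA F) (t : FreeMagma ℕ)
    (h : occ t k = 0) :
    evalW F (Function.update xs k v) t = evalW F xs t := by
  refine evalW_congr F _ _ t fun i hi => ?_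
  have : i ≠ k := fun hh => by subst hh; exact hi h
  exact Function.update_of_ne this _ _

lemma evalW_update_add (xs : ℕ → FA F) (k : ℕ) (u v : FA F) (t : FreeMagma ℕ)
    (h : occ t k = 1) :
    evalW F (Function.update xs k (u + v)) t =
      evalW F (Function.update xs k u) t + evalW F (Function.update xs k v) t := by
  induction t with
  | ih1 i =>
    have hik : i = k := by
      by_contra hik
      rw [occ, if_neg hik] at h; exact one_ne_zero h.symm
    subst hik
    simp [evalW_of]
  | ih2 x y hx hy =>
    rw [occ_mul'] at h
    by_cases hxk : occ x k = 0
    · have hyk : occ y k = 1 := by omega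
      rw [evalW_mul, evalW_mul, evalW_mul,
        evalW_update_of_occ_zero F xs k (u + v) x hxk,
        evalW_update_of_occ_zero F xs k u x hxk,
        evalW_update_of_occ_zero F xs k v x hxk,
        hy hyk, mul_add]
    · have hxk1 : occ x k = 1 := by omega
      have hyk : occ y k = 0 := by omega
      rw [evalW_mul, evalW_mul, evalW_mul,
        evalW_update_of_occ_zero F xs k (u + v) y hyk,
        evalW_update_of_occ_zero F xs k u y hyk,
        evalW_update_of_occ_zero F xs k v y hyk,
        hx hxk1, add_mul]

lemma evalW_update_smul (xs : ℕ → FA F) (k : ℕ) (c : F) (v : FA F) (t : FreeMagma ℕ)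
    (h : occ t k = 1) :
    evalW F (Function.update xs k (c • v)) t =
      c • evalW F (Function.update xs k v) t := by
  induction t with
  | ih1 i =>
    have hik : i = k := by
      by_contra hik
      rw [occ, if_neg hik] at h; exact one_ne_zero h.symm
    subst hik
    simp [evalW_of]
  | ih2 x y hx hy =>
    rw [occ_mul'] at h
    by_cases hxk : occ x k = 0
    · have hyk : occ y k = 1 := by omega
      rw [evalW_mul, evalW_mul,
        evalW_update_of_occ_zero F xs k (c • v) x hxk,
        evalW_update_of_occ_zero F xs k v x hxk,
        hy hyk, mul_smul_comm]
    · have hxk1 : occ x k = 1 := by omega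
      have hyk : occ y k = 0 := by omega
      rw [evalW_mul, evalW_mul,
        evalW_update_of_occ_zero F xs k (c • v) y hyk,
        evalW_update_of_occ_zero F xs k v y hyk,
        hx hxk1, smul_mul_assoc]

/-! ### Linearity of the substitution in one variable -/

lemma lift_update_add {n : ℕ} {f : FreeN F} (hf : f ∈ Pmulti F n) (xs : ℕ → FA F)
    (k : ℕ) (hk : k < n) (u v : FA F) :
    lift F (Function.update xs k (u + v)) f =
      lift F (Function.update xs k u) f + lift F (Function.update xs k v) f := by
  refine Submodule.span_induction ?_ ?_ ?_ ?_ hf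
  · rintro x ⟨t, ht, rfl⟩
    rw [lift_monoN, lift_monoN, lift_monoN]
    exact evalW_update_add F xs k u v t (by rw [ht k, if_pos hk])
  · simp
  · intro a b _ _ ha hb
    rw [map_add, map_add, map_add, ha, hb]; abel
  · intro c a _ ha
    rw [map_smul, map_smul, map_smul, ha, smul_add]

lemma lift_update_smul {n : ℕ} {f : FreeN F} (hf : f ∈ Pmulti F n) (xs : ℕ → FA F)
    (k : ℕ) (hk : k < n) (c : F) (v : FA F) :
    lift F (Function.update xs k (c • v)) f =
      c • lift F (Function.update xs k v) f := by
  refine Submodule.span_induction ?_ ?_ ?_ ?_ hf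
  · rintro x ⟨t, ht, rfl⟩
    rw [lift_monoN, lift_monoN]
    exact evalW_update_smul F xs k c v t (by rw [ht k, if_pos hk])
  · simp
  · intro a b _ _ ha hb
    rw [map_add, map_add, ha, hb, smul_add]
  · intro d a _ ha
    rw [map_smul, map_smul, ha, smul_comm]

lemma lift_update_mem {n : ℕ} {f : FreeN F} (hf : f ∈ Pmulti F n) (xs : ℕ → FA F)
    (k : ℕ) (hk : k < n)
    (H : ∀ m : FreeMagma Unit, lift F (Function.update xs k (mono F m)) f ∈ relI F)
    (v : FA F) : lift F (Function.update xs k v) f ∈ relI F := by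
  induction v using MonoidAlgebra.induction with
  | zero =>
    have h0 : (0 : FA F) = (0 : F) • (0 : FA F) := by simp
    rw [h0, lift_update_smul F hf xs k hk, zero_smul]
    exact (relI F).zero_mem
  | single_add m b w _ _ hw =>
    have hs : (MonoidAlgebra.single m b : FA F) = b • mono F m := by
      rw [mono, MonoidAlgebra.smul_single']
      simp
    rw [hs, lift_update_add F hf xs k hk, lift_update_smul F hf xs k hk]
    exact (relI F).add_mem ((relI F).smul_mem b (H m)) hw

/-! ### Composition with renaming -/

lemma lift_renameVars (xs : ℕ → FA F) (σ : ℕ → ℕ) (f : FreeN F) :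
    lift F xs (renameVars F σ f) = lift F (fun i => xs (σ i)) f := by
  have h : (lift F xs).comp (renameVars F σ) = lift F (fun i => xs (σ i)) := by
    apply hom_ext
    intro i
    simp [renameVars, NonUnitalAlgHom.comp_apply, lift_of_apply]
  exact DFunLike.congr_fun h f

/-! ### The base case: all substituted values are monomials -/

lemma base_case {n : ℕ} (hn : 4 ≤ n) {f : FreeN F} (hf : f ∈ Pmulti F n)
    (alt01 : renameVars F (Equiv.swap 0 1) f = -f)
    (alt23 : renameVars F (Equiv.swap 2 3) f = -f)
    (ms : ℕ → FreeMagma Unit) :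
    lift F (fun i => mono F (ms i)) f ∈ relI F := by
  set ys : ℕ → FA F := fun i => mono F (ms i) with hys
  -- helper for vanishing via alternation in (a,b)
  have swap_case : ∀ a b : ℕ, ms a = ms b →
      renameVars F (Equiv.swap a b) f = -f → lift F ys f ∈ relI F := by
    intro a b hab halt
    have hcomp : (fun i => ys ((Equiv.swap a b) i)) = ys := by
      funext i
      by_cases hia : i = a
      · subst hia; rw [Equiv.swap_apply_left]; simp [hys, hab]
      · by_cases hib : i = b
        · subst hib; rw [Equiv.swap_apply_right]; simp [hys, hab]
        · rw [Equiv.swap_apply_of_ne_of_ne hia hib]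
    have h1 : lift F ys f = - lift F ys f := by
      conv_lhs => rw [← hcomp]
      rw [← lift_renameVars, halt, map_neg]
    have h2 : (2 : F) • lift F ys f = 0 := by
      rw [two_smul]
      nth_rewrite 2 [h1]
      simp
    have h3 : lift F ys f = 0 := by
      rcases smul_eq_zero.mp h2 with h | h
      · exact absurd h two_ne_zero
      · exact h
    rw [h3]; exact (relI F).zero_mem
  by_cases h01 : ms 0 = ms 1
  · exact swap_case 0 1 h01 alt01
  · by_cases h23 : ms 2 = ms 3
    · exact swap_case 2 3 h23 alt23
    · -- every substituted monomial has at least two squares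
      refine Submodule.span_induction ?_ ?_ ?_ ?_ hf
      · rintro x ⟨t, ht, rfl⟩
        rw [lift_monoN, hys, evalW_monos]
        refine Submodule.subset_span ⟨substW ms t, ?_, rfl⟩
        have hsum := countSq_substW ms t
        have hocc : ∀ i, i < 4 → occ t i = 1 := fun i hi => by
          rw [ht i, if_pos (lt_of_lt_of_le hi hn)]
        have e0 := hocc 0 (by norm_num)
        have e1 := hocc 1 (by norm_num)
        have e2 := hocc 2 (by norm_num)
        have e3 := hocc 3 (by norm_num)
        have hexp : ∑ i ∈ Finset.range 4, occ t i * countSq (ms i) =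
            countSq (ms 0) + countSq (ms 1) + countSq (ms 2) + countSq (ms 3) := by
          rw [Finset.sum_range_succ, Finset.sum_range_succ, Finset.sum_range_succ,
            Finset.sum_range_one, e0, e1, e2, e3]
          ring
        have p1 := countSq_add_pos h01
        have p2 := countSq_add_pos h23
        omega
      · exact (relI F).zero_mem
      · intro a b _ _ ha hb
        rw [map_add]; exact (relI F).add_mem ha hb
      · intro c a _ ha
        rw [map_smul]; exact (relI F).smul_mem c ha

/-! ### The inductive purification -/

lemma purify {n : ℕ} (hn : 4 ≤ n) {f : FreeN F} (hf : f ∈ Pmulti F n)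
    (alt01 : renameVars F (Equiv.swap 0 1) f = -f)
    (alt23 : renameVars F (Equiv.swap 2 3) f = -f) :
    ∀ k : ℕ, ∀ xs : ℕ → FA F, (∀ i, k ≤ i → i < n → ∃ m, xs i = mono F m) →
      lift F xs f ∈ relI F := by
  intro k
  induction k with
  | zero =>
    intro xs hxs
    -- replace xs by a fully monomial substitution agreeing on i < n
    choose g hg using fun i (hi : i < n) => hxs i (Nat.zero_le i) hi
    set ms : ℕ → FreeMagma Unit := fun i =>
      if hi : i < n then g i hi else FreeMagma.of () with hms
    have key : lift F xs f = lift F (fun i => mono F (ms i)) f := by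
      refine Submodule.span_induction ?_ ?_ ?_ ?_ hf
      · rintro x ⟨t, ht, rfl⟩
        rw [lift_monoN, lift_monoN]
        refine evalW_congr F _ _ t fun i hi => ?_
        have hin : i < n := by
          by_contra hin
          rw [ht i, if_neg hin] at hi
          exact hi rfl
        rw [hms]
        simp only [dif_pos hin]
        exact hg i hin
      · simp
      · intro a b _ _ ha hb; rw [map_add, map_add, ha, hb]
      · intro c a _ ha; rw [map_smul, map_smul, ha]
    rw [key]
    exact base_case F hn hf alt01 alt23 ms
  | succ k ih =>
    intro xs hxs
    by_cases hk : k < n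
    · have hxsk : xs = Function.update xs k (xs k) := by
        funext i
        by_cases hik : i = k
        · subst hik; simp
        · rw [Function.update_of_ne hik]
      rw [hxsk]
      refine lift_update_mem F hf xs k hk ?_ (xs k)
      intro m
      refine ih (Function.update xs k (mono F m)) ?_
      intro i hi hin
      by_cases hik : i = k
      · subst hik; exact ⟨m, by simp⟩
      · rw [Function.update_of_ne hik]
        exact hxs i (by omega) hin
    · refine ih xs ?_
      intro i hi hin
      exact absurd hin (by omega)

/-- a multilinear polynomial alternating in the pair `(x₀,x₁)` and in the
disjoint pair `(x₂,x₃)` is an identity of `A`. -/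
theorem alternating_two_pairs_is_identity (n : ℕ) (hn : 4 ≤ n)
    (f : FreeN F) (hf : f ∈ Pmulti F n)
    (alt01 : renameVars F (Equiv.swap 0 1) f = -f)
    (alt23 : renameVars F (Equiv.swap 2 3) f = -f) :
    f ∈ IdA F := by
  rw [IdA, Submodule.mem_iInf]
  intro xs
  rw [Submodule.mem_comap]
  exact purify F hn hf alt01 alt23 n xs (fun i hi hin => absurd hin (by omega))
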